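/- Let R ≥ 0 and M > 0, and let f be holomorphic on the annulus {z ∈ ℂ : e^{−(R+1)} < |z| < e^{R+1}} with |f(z)| ≤ M throughout. Let a₀ := (1/2π) ∫₀^{2π} f(e^{iθ}) dθ (the constant Laurent coefficient of f). Then for every z with e^{−R} ≤ |z| ≤ e^{R}, |f(z) − a₀| ≤ (M/(e − 1)) · e^{−R} · (|z| + |z|^{−1}). -/

import Mathlib

open Real MeasureTheory intervalIntegral

section AuxAnnulus

open Set Metric

private lemma key_bound (R M : ℝ) (hR : 0 ≤ R) (hM : 0 < M) (f : ℂ → ℂ)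
    (hf : DifferentiableOn ℂ f
      {z : ℂ | Real.exp (-(R + 1)) < ‖z‖ ∧
        ‖z‖ < Real.exp (R + 1)})
    (hbdd : ∀ z : ℂ, Real.exp (-(R + 1)) < ‖z‖ →
      ‖z‖ < Real.exp (R + 1) → ‖f z‖ ≤ M)
    (rin rout : ℝ) (z : ℂ)
    (h1 : Real.exp (-(R + 1)) < rin) (h2 : rin < ‖z‖)
    (h3 : ‖z‖ < rout) (h4 : rout < Real.exp (R + 1)) (h5 : 1 ≤ rout) :
    ‖f z - (1 / (2 * (π : ℂ))) *
          ∫ θ in (0:ℝ)..(2 * π), f (Complex.exp ((θ : ℂ) * Complex.I))‖ ≤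
      M * ‖z‖ / (rout - ‖z‖) + M * rin / (‖z‖ - rin) := by
  set A : Set ℂ := {z : ℂ | Real.exp (-(R + 1)) < ‖z‖ ∧
        ‖z‖ < Real.exp (R + 1)} with hA
  have hAopen : IsOpen A := by
    rw [hA, Set.setOf_and]
    exact (isOpen_lt continuous_const continuous_norm).inter
      (isOpen_lt continuous_norm continuous_const)
  have hrin0 : 0 < rin := (Real.exp_pos _).trans h1
  have hrout0 : 0 < rout := hrin0.trans (h2.trans h3)
  have ha0 : 0 < ‖z‖ := hrin0.trans h2
  have hzA : z ∈ A := ⟨h1.trans h2, h3.trans h4⟩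
  have hexp1 : Real.exp (-(R + 1)) < 1 := Real.exp_lt_one_iff.2 (by linarith)
  have hzball : z ∈ ball (0:ℂ) rout := by
    simpa [mem_ball_zero_iff] using h3
  have hsub : closedBall (0:ℂ) rout \ ball (0:ℂ) rin ⊆ A := by
    rintro w ⟨hw1, hw2⟩
    rw [mem_closedBall_zero_iff] at hw1
    rw [mem_ball_zero_iff, not_lt] at hw2
    exact ⟨h1.trans_le hw2, hw1.trans_lt h4⟩
  have hsub1 : closedBall (0:ℂ) rout \ ball (0:ℂ) 1 ⊆ A := by
    rintro w ⟨hw1, hw2⟩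
    rw [mem_closedBall_zero_iff] at hw1
    rw [mem_ball_zero_iff, not_lt] at hw2
    exact ⟨hexp1.trans_le hw2, hw1.trans_lt h4⟩
  have hsphere : ∀ ρ : ℝ, rin ≤ ρ → ρ ≤ rout → sphere (0:ℂ) ρ ⊆ A := by
    intro ρ hρ1 hρ2 w hw
    rw [mem_sphere_zero_iff_norm] at hw
    refine ⟨?_, ?_⟩ <;> rw [hw]
    · exact h1.trans_le hρ1
    · exact lt_of_le_of_lt hρ2 h4
  have hfc : ContinuousOn f A := hf.continuousOn
  set g : ℂ → ℂ := dslope f z with hg_def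
  have hg : DifferentiableOn ℂ g A :=
    (Complex.differentiableOn_dslope (hAopen.mem_nhds hzA)).2 hf
  have heq : (∮ w in C(0, rout), g w) = ∮ w in C(0, rin), g w :=
    Complex.circleIntegral_eq_of_differentiable_on_annulus_off_countable hrin0
      (h2.trans h3).le Set.countable_empty (hg.continuousOn.mono hsub)
      (fun w hw => hg.differentiableAt (hAopen.mem_nhds (hsub
        ⟨ball_subset_closedBall hw.1.1, fun h => hw.1.2 (ball_subset_closedBall h)⟩)))
  have hdecomp : ∀ ρ : ℝ, 0 < ρ → rin ≤ ρ → ρ ≤ rout → ρ ≠ ‖z‖ →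
      (∮ w in C(0, ρ), g w) =
        (∮ w in C(0, ρ), (w - z)⁻¹ * f w) - (∮ w in C(0, ρ), (w - z)⁻¹) * f z := by
    intro ρ hρ0 hρ1 hρ2 hρz
    have hsph : sphere (0:ℂ) ρ ⊆ A := hsphere ρ hρ1 hρ2
    have hne : ∀ w ∈ sphere (0:ℂ) ρ, w ≠ z := by
      intro w hw h
      rw [mem_sphere_zero_iff_norm, h] at hw
      exact hρz hw.symm
    have hcont2 : ContinuousOn (fun w => (w - z)⁻¹) (sphere (0:ℂ) ρ) :=
      (continuousOn_id.sub continuousOn_const).inv₀ fun w hw => sub_ne_zero.2 (hne w hw)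
    have hint1 : CircleIntegrable (fun w => (w - z)⁻¹ * f w) 0 ρ :=
      (hcont2.mul (hfc.mono hsph)).circleIntegrable hρ0.le
    have hint2 : CircleIntegrable (fun w => (w - z)⁻¹ * f z) 0 ρ :=
      (hcont2.mul continuousOn_const).circleIntegrable hρ0.le
    calc (∮ w in C(0, ρ), g w)
        = ∮ w in C(0, ρ), ((w - z)⁻¹ * f w - (w - z)⁻¹ * f z) := by
          refine circleIntegral.integral_congr hρ0.le fun w hw => ?_
          rw [hg_def, dslope_of_ne f (hne w hw), slope_def_field, div_eq_inv_mul, mul_sub]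
      _ = (∮ w in C(0, ρ), (w - z)⁻¹ * f w) - ∮ w in C(0, ρ), (w - z)⁻¹ * f z :=
          circleIntegral.integral_sub hint1 hint2
      _ = _ := by
          have := circleIntegral.integral_smul_const (fun w => (w - z)⁻¹) (f z) 0 ρ
          simp only [smul_eq_mul] at this
          rw [this]
  have hI1' : (∮ w in C(0, rout), (w - z)⁻¹) = 2 * π * Complex.I :=
    circleIntegral.integral_sub_inv_of_mem_ball hzball
  have hI2' : (∮ w in C(0, rin), (w - z)⁻¹) = 0 := by
    have hcb : ∀ w ∈ closedBall (0:ℂ) rin, w ≠ z := by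
      intro w hw h
      rw [mem_closedBall_zero_iff] at hw
      rw [h] at hw
      exact absurd h2 (not_lt.2 hw)
    refine Complex.circleIntegral_eq_zero_of_differentiable_on_off_countable hrin0.le
      Set.countable_empty ?_ ?_
    · exact (continuousOn_id.sub continuousOn_const).inv₀
        fun w hw => sub_ne_zero.2 (hcb w hw)
    · intro w hw
      exact (differentiableAt_id.sub_const z).inv
        (sub_ne_zero.2 (hcb w (ball_subset_closedBall hw.1)))
  rw [hdecomp rout hrout0 (h2.trans h3).le le_rfl h3.ne',
    hdecomp rin hrin0 le_rfl (h2.trans h3).le h2.ne, hI1', hI2', zero_mul, sub_zero] at heq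
  -- heq : I1 - 2πI * f z = I2
  have hmove : (∮ w in C(0, 1), w⁻¹ * f w) = ∮ w in C(0, rout), w⁻¹ * f w := by
    refine (Complex.circleIntegral_eq_of_differentiable_on_annulus_off_countable one_pos h5
      Set.countable_empty ?_ ?_).symm
    · refine ContinuousOn.mul (ContinuousOn.inv₀ continuousOn_id ?_) (hfc.mono hsub1)
      rintro w ⟨hw1, hw2⟩
      rw [mem_ball_zero_iff, not_lt] at hw2
      exact fun h => absurd hw2 (by norm_num [h])
    · rintro w ⟨⟨hwb, hwc⟩, -⟩
      have hwA : w ∈ A := hsub1 ⟨ball_subset_closedBall hwb,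
        fun h => hwc (ball_subset_closedBall h)⟩
      have hw0 : w ≠ 0 := by
        rw [mem_closedBall_zero_iff, not_le] at hwc
        exact fun h => absurd hwc (by norm_num [h])
      exact (differentiableAt_id.inv hw0).mul (hf.differentiableAt (hAopen.mem_nhds hwA))
  have hunit : (∮ w in C(0, 1), w⁻¹ * f w)
      = Complex.I * ∫ θ in (0:ℝ)..(2 * π), f (Complex.exp ((θ : ℂ) * Complex.I)) := by
    rw [← intervalIntegral.integral_const_mul]
    simp only [circleIntegral, deriv_circleMap, circleMap, Complex.ofReal_one, zero_add,
      one_mul, smul_eq_mul]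
    refine intervalIntegral.integral_congr fun θ hθ => ?_
    have h0 : Complex.exp ((θ:ℂ) * Complex.I) ≠ 0 := Complex.exp_ne_zero _
    field_simp
  have hIT : (∮ w in C(0, rout), w⁻¹ * f w)
      = Complex.I * ∫ θ in (0:ℝ)..(2 * π), f (Complex.exp ((θ : ℂ) * Complex.I)) :=
    hmove.symm.trans hunit
  set T : ℂ := ∫ θ in (0:ℝ)..(2 * π), f (Complex.exp ((θ : ℂ) * Complex.I)) with hT
  set I1 : ℂ := ∮ w in C(0, rout), (w - z)⁻¹ * f w with hI1
  set I2 : ℂ := ∮ w in C(0, rin), (w - z)⁻¹ * f w with hI2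
  set I3 : ℂ := ∮ w in C(0, rout), w⁻¹ * f w with hI3
  have hπ : (π : ℂ) ≠ 0 := Complex.ofReal_ne_zero.2 Real.pi_ne_zero
  have hhalf : (2 * (π:ℂ) * Complex.I) * ((1 / (2 * (π:ℂ))) * T) = Complex.I * T := by
    field_simp
  have hzeq : (2 * (π:ℂ) * Complex.I) * (f z - (1 / (2 * (π:ℂ))) * T) = I1 - I3 - I2 := by
    calc (2 * (π:ℂ) * Complex.I) * (f z - (1 / (2 * (π:ℂ))) * T)
        = (2 * (π:ℂ) * Complex.I) * f z
            - (2 * (π:ℂ) * Complex.I) * ((1 / (2 * (π:ℂ))) * T) := by ring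
      _ = (2 * (π:ℂ) * Complex.I) * f z - Complex.I * T := by rw [hhalf]
      _ = I1 - I3 - I2 := by rw [hIT]; linear_combination -heq
  -- norm bounds
  have hb1 : ‖I1 - I3‖ ≤ 2 * π * (M * ‖z‖ / (rout - ‖z‖)) := by
    have hsph : sphere (0:ℂ) rout ⊆ A := hsphere rout (h2.trans h3).le le_rfl
    have hne : ∀ w ∈ sphere (0:ℂ) rout, w ≠ z := by
      intro w hw h
      rw [mem_sphere_zero_iff_norm, h] at hw
      exact h3.ne hw
    have hne0 : ∀ w ∈ sphere (0:ℂ) rout, w ≠ (0:ℂ) := by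
      intro w hw h
      rw [mem_sphere_zero_iff_norm, h, norm_zero] at hw
      exact hrout0.ne hw
    have hcont2 : ContinuousOn (fun w => (w - z)⁻¹) (sphere (0:ℂ) rout) :=
      (continuousOn_id.sub continuousOn_const).inv₀ fun w hw => sub_ne_zero.2 (hne w hw)
    have hint1 : CircleIntegrable (fun w => (w - z)⁻¹ * f w) 0 rout :=
      (hcont2.mul (hfc.mono hsph)).circleIntegrable hrout0.le
    have hint3 : CircleIntegrable (fun w => w⁻¹ * f w) 0 rout :=
      ((ContinuousOn.inv₀ continuousOn_id fun w hw => hne0 w hw).mul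
        (hfc.mono hsph)).circleIntegrable hrout0.le
    rw [hI1, hI3, ← circleIntegral.integral_sub hint1 hint3]
    have hpt : ∀ w ∈ sphere (0:ℂ) rout, ‖(w - z)⁻¹ * f w - w⁻¹ * f w‖
        ≤ M * ‖z‖ / (rout * (rout - ‖z‖)) := by
      intro w hw
      have hwnorm : ‖w‖ = rout := mem_sphere_zero_iff_norm.1 hw
      have hwz : w ≠ z := hne w hw
      have hw0 : w ≠ 0 := hne0 w hw
      have hfw : ‖f w‖ ≤ M := by
        have := hsph hw
        exact hbdd w this.1 this.2
      have hwzn : rout - ‖z‖ ≤ ‖w - z‖ := by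
        have := norm_sub_norm_le w z
        rw [hwnorm] at this
        linarith
      have hrw : (w - z)⁻¹ * f w - w⁻¹ * f w = z / ((w - z) * w) * f w := by
        field_simp [sub_ne_zero.2 hwz]
        ring
      rw [hrw, norm_mul, norm_div, norm_mul, hwnorm]
      have hpos1 : 0 < rout - ‖z‖ := sub_pos.2 h3
      have hwz0 : 0 < ‖w - z‖ := norm_pos_iff.2 (sub_ne_zero.2 hwz)
      calc ‖z‖ / (‖w - z‖ * rout) * ‖f w‖
          ≤ ‖z‖ / ((rout - ‖z‖) * rout) * M := by
            gcongr
        _ = M * ‖z‖ / (rout * (rout - ‖z‖)) := by ring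
    have hb := circleIntegral.norm_integral_le_of_norm_le_const hrout0.le hpt
    refine hb.trans_eq ?_
    have hro : rout ≠ 0 := hrout0.ne'
    have hda : rout - ‖z‖ ≠ 0 := (sub_pos.2 h3).ne'
    field_simp
  have hb2 : ‖I2‖ ≤ 2 * π * (M * rin / (‖z‖ - rin)) := by
    have hsph : sphere (0:ℂ) rin ⊆ A := hsphere rin le_rfl (h2.trans h3).le
    rw [hI2]
    have hpt : ∀ w ∈ sphere (0:ℂ) rin, ‖(w - z)⁻¹ * f w‖ ≤ M / (‖z‖ - rin) := by
      intro w hw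
      have hwnorm : ‖w‖ = rin := mem_sphere_zero_iff_norm.1 hw
      have hwz : w ≠ z := by
        intro h
        rw [h] at hwnorm
        exact h2.ne hwnorm.symm
      have hfw : ‖f w‖ ≤ M := by
        have := hsph hw
        exact hbdd w this.1 this.2
      have hwzn : ‖z‖ - rin ≤ ‖w - z‖ := by
        have := norm_sub_norm_le z w
        rw [hwnorm, norm_sub_rev] at this
        linarith
      have hpos1 : 0 < ‖z‖ - rin := sub_pos.2 h2
      rw [norm_mul, norm_inv]
      have hwz0 : 0 < ‖w - z‖ := norm_pos_iff.2 (sub_ne_zero.2 hwz)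
      calc ‖w - z‖⁻¹ * ‖f w‖ ≤ (‖z‖ - rin)⁻¹ * M := by gcongr
        _ = M / (‖z‖ - rin) := by ring
    have hb := circleIntegral.norm_integral_le_of_norm_le_const hrin0.le hpt
    refine hb.trans_eq ?_
    ring
  have hnorm2pi : ‖(2 * (π:ℂ) * Complex.I)‖ = 2 * π := by
    rw [norm_mul, norm_mul, Complex.norm_I, Complex.norm_real, mul_one,
      Real.norm_eq_abs, abs_of_pos Real.pi_pos]
    norm_num
  have h2π : (0:ℝ) < 2 * π := Real.two_pi_pos
  have hfinal : 2 * π * ‖f z - (1 / (2 * (π:ℂ))) * T‖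
      ≤ 2 * π * (M * ‖z‖ / (rout - ‖z‖)
          + M * rin / (‖z‖ - rin)) := by
    calc 2 * π * ‖f z - (1 / (2 * (π:ℂ))) * T‖
        = ‖(2 * (π:ℂ) * Complex.I) * (f z - (1 / (2 * (π:ℂ))) * T)‖ := by
          rw [norm_mul, hnorm2pi]
      _ = ‖I1 - I3 - I2‖ := by rw [hzeq]
      _ ≤ ‖I1 - I3‖ + ‖I2‖ := norm_sub_le _ _
      _ ≤ 2 * π * (M * ‖z‖ / (rout - ‖z‖))
            + 2 * π * (M * rin / (‖z‖ - rin)) := add_le_add hb1 hb2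
      _ = _ := by ring
  exact (mul_le_mul_iff_of_pos_left h2π).1 hfinal

end AuxAnnulus

/-- Interior oscillation decay for bounded holomorphic functions on the annulus
`{e^{−(R+1)} < |z| < e^{R+1}}`: with `a₀` the constant Laurent coefficient
(the average of `f` over the unit circle), on the sub-annulus
`{e^{−R} ≤ |z| ≤ e^{R}}` one has
`|f(z) − a₀| ≤ (M/(e−1)) e^{−R} (|z| + |z|⁻¹)`. -/
theorem bounded_holomorphic_annulus_oscillation (R M : ℝ) (hR : 0 ≤ R)
    (hM : 0 < M) (f : ℂ → ℂ)
    (hf : DifferentiableOn ℂ f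
      {z : ℂ | Real.exp (-(R + 1)) < ‖z‖ ∧
        ‖z‖ < Real.exp (R + 1)})
    (hbdd : ∀ z : ℂ, Real.exp (-(R + 1)) < ‖z‖ →
      ‖z‖ < Real.exp (R + 1) → ‖f z‖ ≤ M) :
    ∀ z : ℂ, Real.exp (-R) ≤ ‖z‖ → ‖z‖ ≤ Real.exp R →
      ‖f z - (1 / (2 * (π : ℂ))) *
          ∫ θ in (0:ℝ)..(2 * π), f (Complex.exp ((θ : ℂ) * Complex.I))‖ ≤
        (M / (Real.exp 1 - 1)) * Real.exp (-R) *
          (‖z‖ + (‖z‖)⁻¹) := by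
  intro z hz1 hz2
  set a : ℝ := ‖z‖ with ha
  have ha0 : 0 < a := (Real.exp_pos _).trans_le hz1
  have h1e : (1:ℝ) < Real.exp 1 := by
    rw [Real.one_lt_exp_iff]
    norm_num
  have hexpR1 : (1:ℝ) ≤ Real.exp R := Real.one_le_exp hR
  have hd1 : 0 < Real.exp (-R) - Real.exp (-(R + 1)) := by
    rw [sub_pos]
    exact Real.exp_lt_exp.2 (by linarith)
  have hd2 : 0 < Real.exp (R + 1) - Real.exp R := by
    rw [sub_pos]
    exact Real.exp_lt_exp.2 (by linarith)
  set t₀ : ℝ := min (Real.exp (-R) - Real.exp (-(R + 1))) (Real.exp (R + 1) - Real.exp R)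
    with ht₀def
  have ht₀ : 0 < t₀ := lt_min hd1 hd2
  set N : ℂ := f z - (1 / (2 * (π : ℂ))) *
      ∫ θ in (0:ℝ)..(2 * π), f (Complex.exp ((θ : ℂ) * Complex.I)) with hN
  set B : ℝ → ℝ := fun t =>
    M * a / (Real.exp (R + 1) - t - a) + M * (Real.exp (-(R + 1)) + t) /
      (a - (Real.exp (-(R + 1)) + t)) with hB
  have hkey : ∀ t ∈ Set.Ioo (0:ℝ) t₀, ‖N‖ ≤ B t := by
    intro t ht
    obtain ⟨ht1, ht2⟩ := ht
    have htd1 : t < Real.exp (-R) - Real.exp (-(R + 1)) := ht2.trans_le (min_le_left _ _)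
    have htd2 : t < Real.exp (R + 1) - Real.exp R := ht2.trans_le (min_le_right _ _)
    have := key_bound R M hR hM f hf hbdd (Real.exp (-(R + 1)) + t) (Real.exp (R + 1) - t) z
      (by linarith) (by linarith) (by linarith) (by linarith) (by linarith)
    simpa [hB, hN, ← ha, sub_sub] using this
  have hdenom1 : Real.exp (R + 1) - 0 - a ≠ 0 := by
    have : a < Real.exp (R + 1) := by linarith
    simp only [sub_zero]
    linarith
  have hdenom2 : a - (Real.exp (-(R + 1)) + 0) ≠ 0 := by
    have : Real.exp (-(R + 1)) < a := by linarith
    simp only [add_zero]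
    linarith
  have hBc : ContinuousAt B 0 := by
    apply ContinuousAt.add
    · exact continuousAt_const.div
        (((continuousAt_const.sub continuousAt_id).sub continuousAt_const)) hdenom1
    · exact (continuousAt_const.mul (continuousAt_const.add continuousAt_id)).div
        (continuousAt_const.sub (continuousAt_const.add continuousAt_id)) hdenom2
  have hlim : Filter.Tendsto B (nhdsWithin 0 (Set.Ioi 0)) (nhds (B 0)) :=
    (hBc.continuousWithinAt).tendsto
  have hle : ‖N‖ ≤ B 0 := by
    refine ge_of_tendsto hlim ?_
    filter_upwards [Ioo_mem_nhdsGT_of_mem ⟨le_refl (0:ℝ), ht₀⟩] with t ht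
    exact hkey t ht
  have hB0 : B 0 = M * a / (Real.exp (R + 1) - a) +
      M * Real.exp (-(R + 1)) / (a - Real.exp (-(R + 1))) := by
    simp [hB]
  rw [hB0] at hle
  refine hle.trans ?_
  -- final algebra
  have hE2 : Real.exp (-R) * Real.exp (R + 1) = Real.exp 1 := by
    rw [← Real.exp_add]
    norm_num
  have h5' : Real.exp (-R) = Real.exp 1 * Real.exp (-(R + 1)) := by
    rw [← Real.exp_add]
    norm_num
  have h6 : Real.exp (-R) * a ≤ 1 := by
    have h := mul_le_mul_of_nonneg_left hz2 (Real.exp_pos (-R)).le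
    rwa [← Real.exp_add, neg_add_cancel, Real.exp_zero] at h
  have hposd1 : 0 < Real.exp (R + 1) - a := by
    have : a < Real.exp (R + 1) := by
      calc a ≤ Real.exp R := hz2
        _ < Real.exp (R + 1) := Real.exp_lt_exp.2 (by linarith)
    linarith
  have hposd2 : 0 < a - Real.exp (-(R + 1)) := by
    have : Real.exp (-(R + 1)) < a := by
      calc Real.exp (-(R + 1)) < Real.exp (-R) := Real.exp_lt_exp.2 (by linarith)
        _ ≤ a := hz1
    linarith
  have he1 : (0:ℝ) < Real.exp 1 - 1 := by linarith
  have term1 : M * a / (Real.exp (R + 1) - a) ≤ M / (Real.exp 1 - 1) * Real.exp (-R) * a := by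
    rw [div_le_iff₀ hposd1]
    have hrwRHS : M / (Real.exp 1 - 1) * Real.exp (-R) * a * (Real.exp (R + 1) - a)
        = (M * (Real.exp (-R) * a * (Real.exp (R + 1) - a))) / (Real.exp 1 - 1) := by
      ring
    rw [hrwRHS, le_div_iff₀ he1]
    -- goal : M * a * (exp 1 - 1) ≤ M * (exp (-R) * a * (exp (R+1) - a))
    calc M * a * (Real.exp 1 - 1)
        = M * a * (Real.exp (-R) * Real.exp (R + 1)) - M * a := by rw [hE2]; ring
      _ ≤ M * a * (Real.exp (-R) * Real.exp (R + 1)) - M * a * (Real.exp (-R) * a) := by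
          have : M * a * (Real.exp (-R) * a) ≤ M * a * 1 :=
            mul_le_mul_of_nonneg_left h6 (mul_pos hM ha0).le
          linarith [this]
      _ = M * (Real.exp (-R) * a * (Real.exp (R + 1) - a)) := by ring
  have term2 : M * Real.exp (-(R + 1)) / (a - Real.exp (-(R + 1)))
      ≤ M / (Real.exp 1 - 1) * Real.exp (-R) * a⁻¹ := by
    have hrw : M / (Real.exp 1 - 1) * Real.exp (-R) * a⁻¹
        = M * Real.exp (-R) / ((Real.exp 1 - 1) * a) := by
      field_simp
    rw [hrw, div_le_div_iff₀ hposd2 (mul_pos he1 ha0)]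
    -- goal : M * exp (-(R+1)) * ((exp 1 - 1) * a) ≤ M * exp (-R) * (a - exp (-(R+1)))
    have hz1' : Real.exp 1 * Real.exp (-(R + 1)) ≤ a := by rw [← h5']; exact hz1
    calc M * Real.exp (-(R + 1)) * ((Real.exp 1 - 1) * a)
        = M * Real.exp (-(R + 1)) * (Real.exp 1 * a) - M * Real.exp (-(R + 1)) * a := by ring
      _ ≤ M * Real.exp (-(R + 1)) * (Real.exp 1 * a)
            - M * Real.exp (-(R + 1)) * (Real.exp 1 * Real.exp (-(R + 1))) := by
          have : M * Real.exp (-(R + 1)) * (Real.exp 1 * Real.exp (-(R + 1)))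
              ≤ M * Real.exp (-(R + 1)) * a :=
            mul_le_mul_of_nonneg_left hz1' (mul_pos hM (Real.exp_pos _)).le
          linarith [this]
      _ = M * Real.exp (-R) * (a - Real.exp (-(R + 1))) := by rw [h5']; ring
  calc M * a / (Real.exp (R + 1) - a) + M * Real.exp (-(R + 1)) / (a - Real.exp (-(R + 1)))
      ≤ M / (Real.exp 1 - 1) * Real.exp (-R) * a
        + M / (Real.exp 1 - 1) * Real.exp (-R) * a⁻¹ := add_le_add term1 term2
    _ = M / (Real.exp 1 - 1) * Real.exp (-R) * (a + a⁻¹) := by ring
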